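/- For every fixed r ∈ [−1, 1], the function Ψ(r, ω) = (ω/sin ω)²·(1 − r·cos ω), extended by continuity at ω = 0 with value 1 − r, is strictly increasing in ω on [0, π). -/
import Mathlib


open Real

private lemma sin_sub_mul_cos_pos {x : ℝ} (h0 : 0 < x) (hπ : x < π) :
    x * Real.cos x < Real.sin x := by
  rcases le_or_gt (Real.cos x) 0 with h | h
  · have hs := Real.sin_pos_of_pos_of_lt_pi h0 hπ
    nlinarith
  · have hx2 : x < π / 2 := by
      by_contra hle
      push_neg at hle
      have := Real.cos_nonpos_of_pi_div_two_le_of_le hle (by linarith [Real.pi_pos])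
      linarith
    have ht : x < Real.tan x := Real.lt_tan h0 hx2
    rw [Real.tan_eq_sin_div_cos] at ht
    calc x * Real.cos x < (Real.sin x / Real.cos x) * Real.cos x := by
          exact mul_lt_mul_of_pos_right ht h
      _ = Real.sin x := by field_simp

private lemma aux1 : StrictMonoOn (fun ω : ℝ => ω / Real.sin ω) (Set.Ioo 0 π) := by
  apply strictMonoOn_of_deriv_pos (convex_Ioo 0 π)
  · apply ContinuousOn.div continuousOn_id Real.continuousOn_sin
    intro x hx
    exact (Real.sin_pos_of_pos_of_lt_pi hx.1 hx.2).ne'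
  · intro x hx
    rw [interior_Ioo] at hx
    have hs : Real.sin x ≠ 0 := (Real.sin_pos_of_pos_of_lt_pi hx.1 hx.2).ne'
    have hd : HasDerivAt (fun ω : ℝ => ω / Real.sin ω)
        ((1 * Real.sin x - x * Real.cos x) / Real.sin x ^ 2) x :=
      (hasDerivAt_id x).div (Real.hasDerivAt_sin x) hs
    rw [hd.deriv]
    apply div_pos
    · have := sin_sub_mul_cos_pos hx.1 hx.2
      linarith
    · positivity

private noncomputable def gg (ω : ℝ) : ℝ := if ω = 0 then 1 else (ω / Real.sin ω) ^ 2

private lemma one_lt_sq {ω : ℝ} (h0 : 0 < ω) (hπ : ω < π) : 1 < (ω / Real.sin ω) ^ 2 := by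
  have hs := Real.sin_pos_of_pos_of_lt_pi h0 hπ
  have h1 : 1 < ω / Real.sin ω := (one_lt_div hs).2 (Real.sin_lt h0)
  nlinarith

private lemma one_le_gg {ω : ℝ} (hω : ω ∈ Set.Ico 0 π) : 1 ≤ gg ω := by
  rcases eq_or_lt_of_le hω.1 with h | h
  · simp [gg, ← h]
  · rw [gg, if_neg h.ne']
    exact (one_lt_sq h hω.2).le

private lemma gg_strictMono : StrictMonoOn gg (Set.Ico 0 π) := by
  intro a ha b hb hab
  have hb0 : 0 < b := lt_of_le_of_lt ha.1 hab
  rcases eq_or_lt_of_le ha.1 with h | h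
  · rw [gg, gg, if_neg hb0.ne', if_pos h.symm]
    exact one_lt_sq hb0 hb.2
  · rw [gg, gg, if_neg h.ne', if_neg hb0.ne']
    have hlt := aux1 ⟨h, ha.2⟩ ⟨hb0, hb.2⟩ hab
    have hsa := Real.sin_pos_of_pos_of_lt_pi h ha.2
    have h1 : 1 < a / Real.sin a := (one_lt_div hsa).2 (Real.sin_lt h)
    simp only at hlt
    nlinarith

private lemma gg_identity (r ω : ℝ) (hω : ω ∈ Set.Ico 0 π) :
    gg ω * (1 - r * Real.cos ω) = (1 + r) * gg ω + (-(2 * r)) * gg (ω / 2) := by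
  rcases eq_or_lt_of_le hω.1 with h | h
  · rw [← h]
    simp [gg]
    ring
  · have h2 : (0 : ℝ) < ω / 2 := by linarith
    simp only [gg, if_neg h.ne', if_neg h2.ne']
    have hs : Real.sin (ω / 2) ≠ 0 :=
      (Real.sin_pos_of_pos_of_lt_pi h2 (by linarith [Real.pi_pos, hω.2])).ne'
    have hc : (0 : ℝ) < Real.cos (ω / 2) :=
      Real.cos_pos_of_mem_Ioo ⟨by linarith [Real.pi_pos], by linarith [hω.2]⟩
    have hsin : Real.sin ω = 2 * Real.sin (ω / 2) * Real.cos (ω / 2) := by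
      rw [← Real.sin_two_mul]
      ring_nf
    have hcos : Real.cos ω = 2 * Real.cos (ω / 2) ^ 2 - 1 := by
      rw [← Real.cos_two_mul]
      ring_nf
    rw [hsin, hcos]
    field_simp
    ring

theorem Psi_strictMono (r : ℝ) (hr : r ∈ Set.Icc (-1 : ℝ) 1) :
    StrictMonoOn
      (fun ω : ℝ => if ω = 0 then 1 - r
        else (ω / Real.sin ω) ^ 2 * (1 - r * Real.cos ω))
      (Set.Ico 0 π) := by
  have heq : ∀ ω ∈ Set.Ico 0 π,
      (if ω = 0 then 1 - r else (ω / Real.sin ω) ^ 2 * (1 - r * Real.cos ω))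
        = gg ω * (1 - r * Real.cos ω) := by
    intro ω _
    by_cases h : ω = 0 <;> simp [gg, h]
  intro a ha b hb hab
  simp only
  rw [heq a ha, heq b hb]
  have hb0 : 0 < b := lt_of_le_of_lt ha.1 hab
  rcases le_or_gt 0 r with hr0 | hr0
  · -- r ≥ 0 : product of increasing nonneg functions
    have hga : 0 < gg a := lt_of_lt_of_le one_pos (one_le_gg ha)
    have hgab : gg a < gg b := gg_strictMono ha hb hab
    have hcos : Real.cos b ≤ Real.cos a := by
      apply Real.cos_le_cos_of_nonneg_of_le_pi ha.1 hb.2.le hab.le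
    have hcb1 : Real.cos b < 1 := by
      have := Real.strictAntiOn_cos (Set.mem_Icc.2 ⟨le_refl (0:ℝ), Real.pi_pos.le⟩)
        (Set.mem_Icc.2 ⟨hb0.le, hb.2.le⟩) hb0
      simpa using this
    have hfb : 0 < 1 - r * Real.cos b := by
      have : r * Real.cos b ≤ |r * Real.cos b| := le_abs_self _
      rw [abs_mul] at this
      have h1 : |r| ≤ 1 := abs_le.2 ⟨hr.1, hr.2⟩
      have h2 : |Real.cos b| < 1 := by
        rw [abs_lt]
        constructor
        · nlinarith [Real.neg_one_le_cos b, Real.sin_pos_of_pos_of_lt_pi hb0 hb.2,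
            Real.sin_sq_add_cos_sq b]
        · exact hcb1
      nlinarith [abs_nonneg r, abs_nonneg (Real.cos b)]
    have hfa : 1 - r * Real.cos a ≤ 1 - r * Real.cos b := by nlinarith
    have hfa0 : 0 ≤ 1 - r * Real.cos a := by
      have h1 : |r| ≤ 1 := abs_le.2 ⟨hr.1, hr.2⟩
      have : r * Real.cos a ≤ |r| * |Real.cos a| := by
        calc r * Real.cos a ≤ |r * Real.cos a| := le_abs_self _
          _ = |r| * |Real.cos a| := abs_mul _ _
      nlinarith [Real.abs_cos_le_one a, abs_nonneg r]
    calc gg a * (1 - r * Real.cos a) ≤ gg a * (1 - r * Real.cos b) := by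
          exact mul_le_mul_of_nonneg_left hfa hga.le
      _ < gg b * (1 - r * Real.cos b) := by
          exact mul_lt_mul_of_pos_right hgab hfb
  · -- r < 0 : use half-angle identity
    rw [gg_identity r a ha, gg_identity r b hb]
    have hmem2 : ∀ x ∈ Set.Ico (0:ℝ) π, x / 2 ∈ Set.Ico (0:ℝ) π := by
      intro x hx
      exact ⟨by linarith [hx.1], by linarith [hx.2, Real.pi_pos]⟩
    have h1 : gg a ≤ gg b := (gg_strictMono ha hb hab).le
    have h2 : gg (a / 2) < gg (b / 2) :=
      gg_strictMono (hmem2 a ha) (hmem2 b hb) (by linarith)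
    have hr1 : 0 ≤ 1 + r := by linarith [hr.1]
    have hr2 : 0 < -(2 * r) := by linarith
    nlinarith
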